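/- For a loxodromic Möbius transformation f with β(f) = 4 sinh²((t(f) + iθ(f))/2), t(f) ≥ 0, θ(f) ∈ (−π, π], one has cos(θ(f)) = (|β(f)+4| − |β(f)|)/4. -/

import Mathlib

open Complex

theorem stmt2 (t θ : ℝ) (ht : 0 ≤ t) (hθ1 : -Real.pi < θ) (hθ2 : θ ≤ Real.pi)
    (β : ℂ) (hβ : β = 4 * (Complex.sinh ((t + θ * Complex.I) / 2)) ^ 2) :
    Real.cos θ = (‖β + 4‖ - ‖β‖) / 4 := by
  set w : ℂ := ((t : ℂ) + θ * Complex.I) / 2 with hw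
  have h4 : β + 4 = 4 * (Complex.cosh w) ^ 2 := by
    rw [hβ]
    linear_combination (-4 : ℂ) * Complex.cosh_sq_sub_sinh_sq w
  have habs1 : ‖β + 4‖ = 4 * Complex.normSq (Complex.cosh w) := by
    rw [h4, norm_mul, norm_pow, Complex.sq_norm]
    norm_num
  have habs2 : ‖β‖ = 4 * Complex.normSq (Complex.sinh w) := by
    rw [hβ, norm_mul, norm_pow, Complex.sq_norm]
    norm_num
  have hconj : (starRingEnd ℂ) w = ((t : ℂ) - θ * Complex.I) / 2 := by
    simp [hw, map_div₀, map_add, map_mul, map_ofNat, sub_eq_add_neg]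
  have hsub : w - (starRingEnd ℂ) w = θ * Complex.I := by
    rw [hconj, hw]; ring
  have key : (Complex.normSq (Complex.cosh w) : ℂ) - Complex.normSq (Complex.sinh w)
      = Complex.cos θ := by
    rw [← Complex.mul_conj, ← Complex.mul_conj, ← Complex.cosh_conj, ← Complex.sinh_conj,
      ← Complex.cosh_sub, hsub, Complex.cosh_mul_I]
  have key' : Complex.normSq (Complex.cosh w) - Complex.normSq (Complex.sinh w)
      = Real.cos θ := by
    have := congrArg Complex.re key
    simpa [Complex.cos_ofReal_re] using this
  rw [habs1, habs2, ← key']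
  ring
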